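/- Let K be a compact Hausdorff topological group, d ∈ ℕ, and ξ : K → ℝ a continuous function such that the iterated difference (∂_{g₁} ∘ ⋯ ∘ ∂_{g_{d+1}})(ξ) is identically zero for all g₁, …, g_{d+1} ∈ K. Then ξ is constant. (Every continuous real-valued polynomial map on a compact group is constant.) -/

import Mathlib

/-- The left difference operator: `(∂_g ξ)(h) = ξ(g⁻¹h) - ξ(h)`. -/
def lDiff {K : Type*} [Group K] (g : K) (ξ : K → ℝ) : K → ℝ :=
  fun h => ξ (g⁻¹ * h) - ξ h

/-- Every continuous real-valued polynomial map on a compact Hausdorff topological group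
is constant. -/
theorem stmt7 {K : Type*} [Group K] [TopologicalSpace K] [IsTopologicalGroup K]
    [CompactSpace K] [T2Space K] (d : ℕ) (ξ : K → ℝ) (hc : Continuous ξ)
    (hp : ∀ gs : List K, gs.length = d + 1 → gs.foldr lDiff ξ = 0) :
    ∃ c : ℝ, ∀ x : K, ξ x = c := by
  induction d generalizing ξ with
  | zero =>
    refine ⟨ξ 1, fun x => ?_⟩
    have h := congrFun (hp [x⁻¹] rfl) 1
    simp [lDiff] at h
    linarith [h]
  | succ d ih =>
    have hconst : ∀ g : K, ∃ c, ∀ x, lDiff g ξ x = c := by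
      intro g
      refine ih (lDiff g ξ) ((hc.comp (continuous_mul_left g⁻¹)).sub hc) ?_
      intro gs hl
      have h := hp (gs ++ [g]) (by simp [hl])
      rw [List.foldr_append] at h
      simpa using h
    obtain ⟨x₀, -, hx₀⟩ := isCompact_univ.exists_isMaxOn ⟨1, trivial⟩ hc.continuousOn
    have hmax : ∀ x : K, ξ x ≤ ξ x₀ := fun x => hx₀ (Set.mem_univ x)
    have key : ∀ g x : K, ξ (g⁻¹ * x) = ξ x := by
      intro g x
      obtain ⟨c, hcg⟩ := hconst g
      obtain ⟨c', hcg'⟩ := hconst g⁻¹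
      have h1 : c ≤ 0 := by
        have := hcg x₀
        simp only [lDiff] at this
        linarith [hmax (g⁻¹ * x₀)]
      have h2 : c' ≤ 0 := by
        have := hcg' x₀
        simp only [lDiff] at this
        linarith [hmax (g⁻¹⁻¹ * x₀)]
      have h3 : c + c' = 0 := by
        have ha := hcg (g * x)
        have hb := hcg' x
        simp only [lDiff, inv_inv, inv_mul_cancel_left] at ha hb
        linarith
      have hc0 : c = 0 := by linarith
      have := hcg x
      simp only [lDiff, hc0] at this
      linarith
    exact ⟨ξ 1, fun x => by simpa using key x⁻¹ 1⟩
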